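/- arXiv:2410.00648 — 4 statements merged into one kernel-verified Lean document; each statement's English description precedes it below -/
import Mathlib

section
/- Let s ≥ 2 and t ≥ 1 be integers, let G be a finite simple graph with vertices x, y, z, and let W ⊆ V(G) \ {z} be a vertex subset with x, y ∈ W. Suppose there exist s paths P_1, …, P_s from x to y in the induced subgraph G[W] whose lengths are s consecutive integers, and there exist t admissible paths Q_1, …, Q_t from y to z in the induced subgraph G[(V(G) \ W) ∪ {y}]. Then G contains at least s + t − 1 paths from x to z whose lengths are consecutive integers. -/
lemma append_isPath_aux {V : Type*} {G : SimpleGraph V} {x y z : V}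
    (p : G.Walk x y) (q : G.Walk y z) (hp : p.IsPath) (hq : q.IsPath)
    (hdisj : ∀ u, u ∈ p.support → u ∈ q.support → u = y) :
    (p.append q).IsPath := by
  rw [SimpleGraph.Walk.isPath_def, SimpleGraph.Walk.support_append,
    List.nodup_append]
  refine ⟨hp.support_nodup, ?_, ?_⟩
  · have := hq.support_nodup
    rw [q.support_eq_cons] at this
    exact this.of_cons
  · intro u hu v hu' huv
    subst v
    have h1 : u ∈ q.support := List.mem_of_mem_tail hu'
    have h2 := hdisj u hu h1
    subst h2
    have := hq.support_nodup
    rw [q.support_eq_cons] at this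
    exact (List.nodup_cons.mp this).1 hu'

/-- Merging lemma: given `s` consecutive paths from `x` to `y` inside `W` and `t`
admissible paths from `y` to `z` avoiding `W \ {y}`, the graph contains `s + t - 1`
paths from `x` to `z` of consecutive lengths. -/
theorem merge_consecutive_and_admissible_paths
    {V : Type*} [Fintype V] (G : SimpleGraph V) (x y z : V) (W : Set V)
    (s t : ℕ) (hs : 2 ≤ s) (ht : 1 ≤ t)
    (hzW : z ∉ W) (hxW : x ∈ W) (hyW : y ∈ W)
    (hP : ∃ ℓ : ℕ, ∀ i : ℕ, i < s →
      ∃ P : G.Walk x y, P.IsPath ∧ (∀ u ∈ P.support, u ∈ W) ∧ P.length = ℓ + i)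
    (hQ : ∃ m d : ℕ, 2 ≤ m ∧ (d = 1 ∨ d = 2) ∧ ∀ j : ℕ, j < t →
      ∃ Q : G.Walk y z, Q.IsPath ∧ (∀ u ∈ Q.support, u ∉ W ∨ u = y) ∧
        Q.length = m + d * j) :
    ∃ L : ℕ, ∀ i : ℕ, i < s + t - 1 →
      ∃ R : G.Walk x z, R.IsPath ∧ R.length = L + i := by
  obtain ⟨ℓ, hP⟩ := hP
  obtain ⟨m, d, hm, hd, hQ⟩ := hQ
  refine ⟨ℓ + m, fun k hk => ?_⟩
  -- find i < s, j < t with i + d * j = k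
  have hij : ∃ i j, i < s ∧ j < t ∧ i + d * j = k := by
    rcases hd with rfl | rfl
    · rcases le_or_gt k (s - 1) with h | h
      · exact ⟨k, 0, by omega, by omega, by omega⟩
      · exact ⟨s - 1, k - (s - 1), by omega, by omega, by omega⟩
    · rcases le_or_gt k (s - 1) with h | h
      · exact ⟨k, 0, by omega, by omega, by omega⟩
      · exact ⟨k - 2 * ((k - s + 2) / 2), (k - s + 2) / 2, by omega, by omega, by omega⟩
  obtain ⟨i, j, hi, hj, hijk⟩ := hij
  obtain ⟨P, hPpath, hPsupp, hPlen⟩ := hP i hi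
  obtain ⟨Q, hQpath, hQsupp, hQlen⟩ := hQ j hj
  refine ⟨P.append Q, append_isPath_aux P Q hPpath hQpath ?_, ?_⟩
  · intro u hu hu'
    rcases hQsupp u hu' with h | h
    · exact absurd (hPsupp u hu) h
    · exact h
  · rw [SimpleGraph.Walk.length_append, hPlen, hQlen]
    omega
end

section
/- Let G be a finite simple non-bipartite graph and let x and y be distinct vertices of G such that the graph G + xy obtained by adding the edge xy is 2-connected. Then G contains a path from x to y of odd length and a path from x to y of even length. -/
open SimpleGraph

namespace OddEvenAux
variable {V : Type*}


/-- Truncate a walk at the first vertex belonging to `S`. -/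
lemma exists_walk_until {H : SimpleGraph V} (S : Set V) :
    ∀ {u v : V} (w : H.Walk u v), v ∈ S →
    ∃ (c : V), c ∈ S ∧ ∃ p : H.Walk u c,
      (∀ z ∈ p.support, z ∈ S → z = c) ∧ (∀ z ∈ p.support, z ∈ w.support) := by
  intro u v w
  induction w with
  | nil =>
    intro hv
    exact ⟨_, hv, Walk.nil, by simp, by simp⟩
  | @cons a b c h q ih =>
    intro hv
    by_cases ha : a ∈ S
    · exact ⟨a, ha, Walk.nil, by simp +contextual, by simp⟩
    · obtain ⟨d, hd, p, hp1, hp2⟩ := ih hv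
      refine ⟨d, hd, Walk.cons h p, ?_, ?_⟩
      · intro z hz hzS
        rcases (Walk.mem_support_iff _).mp hz with rfl | hz'
        · exact absurd hzS ha
        · exact hp1 z hz' hzS
      · intro z hz
        rcases (Walk.mem_support_iff _).mp hz with rfl | hz'
        · simp
        · simp only [Walk.support_cons, List.mem_cons]
          exact Or.inr (hp2 z hz')

/-- Path version. -/
lemma exists_path_until {H : SimpleGraph V} (S : Set V) {u v : V} (w : H.Walk u v)
    (hv : v ∈ S) :
    ∃ (c : V), c ∈ S ∧ ∃ p : H.Walk u c, p.IsPath ∧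
      (∀ z ∈ p.support, z ∈ S → z = c) ∧ (∀ z ∈ p.support, z ∈ w.support) := by
  classical
  obtain ⟨c, hc, p, hp1, hp2⟩ := exists_walk_until S w hv
  exact ⟨c, hc, p.toPath, p.toPath.2,
    fun z hz hzS => hp1 z (p.support_toPath_subset hz) hzS,
    fun z hz => hp2 z (p.support_toPath_subset hz)⟩




lemma end_not_mem_takeUntil [DecidableEq V] {H : SimpleGraph V} {x w c : V} {p : H.Walk x w}
    (hp : p.IsPath) (hc : c ∈ p.support) (hcw : c ≠ w) :
    w ∉ (p.takeUntil c hc).support := by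
  have hsp : p.support = (p.takeUntil c hc).support ++ (p.dropUntil c hc).support.tail := by
    conv_lhs => rw [← p.take_spec hc]
    rw [Walk.support_append]
  have hnd := hp.support_nodup
  rw [hsp, List.nodup_append] at hnd
  intro hw
  refine hnd.2.2 _ hw _ ?_ rfl
  have h1 : w ∈ (p.dropUntil c hc).support := Walk.end_mem_support _
  rw [Walk.support_eq_cons (p.dropUntil c hc), List.mem_cons] at h1
  rcases h1 with h1 | h1
  · exact absurd h1.symm hcw
  · exact h1

/-- The two arcs of a cycle between two distinct vertices on it. -/
lemma cycle_arcs_core [DecidableEq V] {H : SimpleGraph V} {c₁ c₂ : V} (c : H.Walk c₁ c₁)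
    (hc : c.IsCycle) (h2 : c₂ ∈ c.support) (hne : c₂ ≠ c₁) :
    ∃ (A B : H.Walk c₁ c₂), A.IsPath ∧ B.IsPath ∧ A.length + B.length = c.length ∧
      (∀ z ∈ A.support, z ∈ c.support) ∧ (∀ z ∈ B.support, z ∈ c.support) ∧
      (∀ z ∈ A.support, z ∈ B.support → z = c₁ ∨ z = c₂) := by
  cases c with
  | nil => simpa using hne ((Walk.mem_support_nil_iff).mp h2)
  | @cons _ b _ h t =>
    have htpath : t.IsPath := Walk.IsPath.mk' (by simpa using hc.2)
    have h2t : c₂ ∈ t.support := by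
      rcases (Walk.mem_support_iff _).mp h2 with rfl | h'
      · exact absurd rfl hne
      · exact h'
    set T := t.takeUntil c₂ h2t with hT
    set D := t.dropUntil c₂ h2t with hD
    have hsp : t.support = T.support ++ D.support.tail := by
      conv_lhs => rw [← t.take_spec h2t]
      rw [Walk.support_append]
    have hnd := htpath.support_nodup
    rw [hsp, List.nodup_append] at hnd
    have hc1D : c₁ ∈ D.support.tail := by
      have h1 : c₁ ∈ D.support := Walk.end_mem_support _
      rw [Walk.support_eq_cons D, List.mem_cons] at h1
      rcases h1 with h1 | h1
      · exact absurd h1.symm hne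
      · exact h1
    have hc1T : c₁ ∉ T.support := fun hw => hnd.2.2 _ hw _ hc1D rfl
    refine ⟨Walk.cons h T, D.reverse, ?_, ?_, ?_, ?_, ?_, ?_⟩
    · rw [Walk.cons_isPath_iff]
      exact ⟨htpath.takeUntil h2t, hc1T⟩
    · exact (htpath.dropUntil h2t).reverse
    · have := congrArg Walk.length (t.take_spec h2t)
      rw [Walk.length_append, ← hT, ← hD] at this
      simp only [Walk.length_cons, Walk.length_reverse]
      omega
    · intro z hz
      rcases (Walk.mem_support_iff _).mp hz with rfl | hz'
      · simp
      · simp only [Walk.support_cons, List.mem_cons]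
        exact Or.inr (by rw [hsp]; exact List.mem_append_left _ hz')
    · intro z hz
      rw [Walk.support_reverse, List.mem_reverse] at hz
      simp only [Walk.support_cons, List.mem_cons]
      refine Or.inr ?_
      rw [hsp]
      rw [Walk.support_eq_cons D, List.mem_cons] at hz
      rcases hz with rfl | hz
      · exact List.mem_append_left _ (Walk.end_mem_support T)
      · exact List.mem_append_right _ hz
    · intro z hz hzB
      rw [Walk.support_reverse, List.mem_reverse] at hzB
      rcases (Walk.mem_support_iff _).mp hz with rfl | hz'
      · exact Or.inl rfl
      · rw [Walk.support_eq_cons D, List.mem_cons] at hzB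
        rcases hzB with rfl | hzB
        · exact Or.inr rfl
        · exact absurd hzB (fun hh => hnd.2.2 _ hz' _ hh rfl)

/-- Two distinct vertices on a cycle are joined by two arc paths whose lengths
add up to the cycle length. -/
lemma cycle_arcs [DecidableEq V] {H : SimpleGraph V} {v c₁ c₂ : V} (c : H.Walk v v)
    (hc : c.IsCycle) (h1 : c₁ ∈ c.support) (h2 : c₂ ∈ c.support) (hne : c₂ ≠ c₁) :
    ∃ (A B : H.Walk c₁ c₂), A.IsPath ∧ B.IsPath ∧ A.length + B.length = c.length ∧
      (∀ z ∈ A.support, z ∈ c.support) ∧ (∀ z ∈ B.support, z ∈ c.support) ∧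
      (∀ z ∈ A.support, z ∈ B.support → z = c₁ ∨ z = c₂) := by
  -- membership in tail
  have htail : ∀ z ∈ c.support, z ∈ c.support.tail := by
    intro z hz
    cases c with
    | nil => simpa using (by simpa using hc.three_le_length : (3:ℕ) ≤ 0)
    | cons h t =>
      simp only [Walk.support_cons, List.mem_cons] at hz
      simp only [Walk.support_cons, List.tail_cons]
      rcases hz with rfl | hz
      · exact Walk.end_mem_support t
      · exact hz
  set c' := c.rotate _ h1 with hc'
  have hcyc' : c'.IsCycle := hc.rotate h1
  have hperm : c'.support.tail ~r c.support.tail := Walk.support_rotate c _ h1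
  have hsub : ∀ z ∈ c'.support, z ∈ c.support := by
    intro z hz
    rcases (Walk.mem_support_iff _).mp hz with rfl | hz'
    · exact h1
    · exact List.mem_of_mem_tail (hperm.perm.mem_iff.mp hz')
  have h2' : c₂ ∈ c'.support := by
    rw [Walk.support_eq_cons c']
    exact List.mem_cons_of_mem _ (hperm.perm.mem_iff.mpr (htail _ h2))
  obtain ⟨A, B, hA, hB, hlen, hAs, hBs, hAB⟩ := cycle_arcs_core c' hcyc' h2' hne
  have hlen' : c'.length = c.length := by
    have := (Walk.rotate_darts c _ h1).perm.length_eq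
    rwa [Walk.length_darts, Walk.length_darts] at this
  exact ⟨A, B, hA, hB, by omega, fun z hz => hsub z (hAs z hz),
    fun z hz => hsub z (hBs z hz), hAB⟩


/-- Whitney's theorem for `k = 2`: two internally disjoint paths. -/
lemma whitney {W : Type*} {H : SimpleGraph W} (hconn : H.Connected)
    (hcut : ∀ v a b : W, a ≠ v → b ≠ v → ∃ w : H.Walk a b, v ∉ w.support)
    (hbig : ∀ a b : W, ∃ z, z ≠ a ∧ z ≠ b) :
    ∀ (n : ℕ) (x y : W), x ≠ y → H.dist x y = n →
      ∃ p q : H.Walk x y, p.IsPath ∧ q.IsPath ∧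
        ∀ z ∈ p.support, z ∈ q.support → z = x ∨ z = y := by
  classical
  intro n
  induction n using Nat.strong_induction_on with
  | _ n ih =>
    intro x y hxy hdist
    rcases n with _ | n
    · have := hconn.pos_dist_of_ne hxy
      omega
    rcases n with _ | m
    · -- base case : x and y adjacent
      have hadj : H.Adj x y := (dist_eq_one_iff_adj).mp hdist
      set H₂ := H.deleteEdges {s(x,y)} with hH₂
      have hmove : ∀ {a b v : W} (w : H.Walk a b), v ∉ w.support → (v = x ∨ v = y) →
          H₂.Reachable a b := by
        intro a b v w hv hvxy
        refine ⟨w.transfer H₂ ?_⟩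
        intro e he
        rw [hH₂, edgeSet_deleteEdges, Set.mem_diff]
        refine ⟨w.edges_subset_edgeSet he, ?_⟩
        intro hee
        rw [Set.mem_singleton_iff] at hee
        subst hee
        rcases hvxy with rfl | rfl
        · exact hv (w.fst_mem_support_of_mem_edges he)
        · exact hv (w.snd_mem_support_of_mem_edges he)
      have hreach : H₂.Reachable x y := by
        by_contra hnot
        obtain ⟨z, hzx, hzy⟩ := hbig x y
        by_cases hzr : H₂.Reachable z x
        · obtain ⟨w, hw⟩ := hcut x z y hzx hxy.symm
          exact hnot (hzr.symm.trans (hmove w hw (Or.inl rfl)))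
        · obtain ⟨w, hw⟩ := hcut y z x hzy hxy
          exact hzr (hmove w hw (Or.inr rfl))
      obtain ⟨q₀⟩ := hreach
      refine ⟨Walk.cons hadj Walk.nil,
        ((q₀.toPath : H₂.Walk x y).mapLe (deleteEdges_le _)), ?_, ?_, ?_⟩
      · rw [Walk.cons_isPath_iff]
        exact ⟨Walk.IsPath.nil, by simpa using hxy⟩
      · exact (Walk.mapLe_isPath (deleteEdges_le _)).mpr q₀.toPath.2
      · intro z hz _
        simpa using hz
    · -- inductive step, dist x y = m + 2
      obtain ⟨pp, hpp, hpplen⟩ := (hconn x y).exists_path_of_dist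
      rw [hdist] at hpplen
      obtain ⟨w, s, hwy, hslen⟩ : ∃ (w : W) (s : H.Walk x w), H.Adj w y ∧ s.length = m + 1 := by
        cases hr : pp.reverse with
        | nil =>
          exfalso
          have := congrArg Walk.length hr
          rw [Walk.length_reverse, hpplen] at this
          simp at this
        | cons h t =>
          refine ⟨_, t.reverse, h.symm, ?_⟩
          have := congrArg Walk.length hr
          rw [Walk.length_reverse, hpplen] at this
          simp only [Walk.length_cons] at this
          rw [Walk.length_reverse]
          omega
      have hdxw : H.dist x w = m + 1 := by
        have hle : H.dist x w ≤ m + 1 := hslen ▸ dist_le s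
        have hd1 : H.dist w y = 1 := (dist_eq_one_iff_adj).mpr hwy
        have hge : m + 2 ≤ H.dist x w + H.dist w y := hdist ▸ hconn.dist_triangle
        omega
      have hxw : x ≠ w := by
        intro h
        rw [← h, SimpleGraph.dist_self] at hdxw
        omega
      have hwy' : w ≠ y := by
        intro h
        rw [h, hdist] at hdxw
        omega
      obtain ⟨p, q, hp, hq, hdisj⟩ := ih (m+1) (by omega) x w hxw hdxw
      have key : ∀ (p q : H.Walk x w), p.IsPath → q.IsPath →
          (∀ z ∈ p.support, z ∈ q.support → z = x ∨ z = w) →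
          y ∉ q.support →
          ∀ (c : W) (hc : c ∈ p.support) (R : H.Walk y c), R.IsPath → c ≠ w →
          (∀ z ∈ R.support, (z ∈ p.support ∨ z ∈ q.support) → z = c) →
          ∃ P Q : H.Walk x y, P.IsPath ∧ Q.IsPath ∧
            ∀ z ∈ P.support, z ∈ Q.support → z = x ∨ z = y := by
        intro p q hp hq hdisj hyq c hc R hR hcw hRS
        have htw : w ∉ (p.takeUntil c hc).support := end_not_mem_takeUntil hp hc hcw
        have hndrev := hR.reverse.support_nodup
        rw [Walk.support_eq_cons R.reverse, List.nodup_cons] at hndrev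
        refine ⟨(p.takeUntil c hc).append R.reverse, q.concat hwy, ?_, ?_, ?_⟩
        · apply Walk.IsPath.mk'
          rw [Walk.support_append, List.nodup_append]
          refine ⟨(hp.takeUntil hc).support_nodup, hndrev.2, ?_⟩
          intro z hz _ hz' hzz; rw [← hzz] at hz'
          have hzR : z ∈ R.support := by
            have h0 : z ∈ R.reverse.support := List.mem_of_mem_tail hz'
            rwa [Walk.support_reverse, List.mem_reverse] at h0
          have hzc : z = c := hRS z hzR (Or.inl (p.support_takeUntil_subset hc hz))
          subst hzc
          exact hndrev.1 hz'
        · apply Walk.IsPath.mk'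
          rw [Walk.support_concat, List.nodup_append]
          refine ⟨hq.support_nodup, List.nodup_singleton y, ?_⟩
          intro z hz _ hz' hzz; rw [← hzz] at hz'
          rw [List.mem_singleton] at hz'
          subst hz'
          exact hyq hz
        · intro z hzP hzQ
          rw [Walk.support_concat, List.mem_append,
            List.mem_singleton] at hzQ
          rcases hzQ with hzq | rfl
          · rw [Walk.mem_support_append_iff] at hzP
            rcases hzP with hzt | hzr
            · rcases hdisj z (p.support_takeUntil_subset hc hzt) hzq with h | rfl
              · exact Or.inl h
              · exact absurd hzt htw
            · have hzR : z ∈ R.support := by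
                rwa [Walk.support_reverse, List.mem_reverse] at hzr
              have hzc : z = c := hRS z hzR (Or.inr hzq)
              subst hzc
              rcases hdisj z hc hzq with h | rfl
              · exact Or.inl h
              · exact absurd rfl hcw
          · exact Or.inr rfl
      by_cases hyp : y ∈ p.support
      · have hyq : y ∉ q.support := by
          intro hyq
          rcases hdisj y hyp hyq with rfl | rfl
          · exact hxy rfl
          · exact hwy' rfl
        exact key p q hp hq hdisj hyq y hyp Walk.nil Walk.IsPath.nil hwy'.symm
          (by intro z hz _; simpa using hz)
      · by_cases hyq : y ∈ q.support
        · exact key q p hq hp (fun z h1 h2 => hdisj z h2 h1) hyp y hyq Walk.nil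
            Walk.IsPath.nil hwy'.symm (by intro z hz _; simpa using hz)
        · obtain ⟨R₀, hR₀⟩ := hcut w y x hwy'.symm hxw
          have hxS : x ∈ {z | z ∈ p.support ∨ z ∈ q.support} := Or.inl p.start_mem_support
          obtain ⟨c, hcS, R, hRp, hRS, hRsub⟩ :=
            exists_path_until {z | z ∈ p.support ∨ z ∈ q.support} R₀ hxS
          have hcw : c ≠ w := by
            intro h
            subst h
            exact hR₀ (hRsub c R.end_mem_support)
          rcases hcS with hcp | hcq
          · exact key p q hp hq hdisj hyq c hcp R hRp hcw hRS
          · exact key q p hq hp (fun z h1 h2 => hdisj z h2 h1) hyp c hcq R hRp hcw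
              (fun z hz hm => hRS z hz (Or.symm hm))




/-- Auxiliary graph: `G'` plus two apex vertices, `inr false` joined to `x` and `y`,
and `inr true` joined to every vertex of `cs`. -/
def apexGraph (G' : SimpleGraph V) (x y : V) (cs : Set V) : SimpleGraph (V ⊕ Bool) where
  Adj a b :=
    match a, b with
    | Sum.inl u, Sum.inl v => G'.Adj u v
    | Sum.inl u, Sum.inr true => u ∈ cs
    | Sum.inl u, Sum.inr false => u = x ∨ u = y
    | Sum.inr true, Sum.inl u => u ∈ cs
    | Sum.inr false, Sum.inl u => u = x ∨ u = y
    | Sum.inr _, Sum.inr _ => False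
  symm := by
    constructor
    rintro (u | (_ | _)) (v | (_ | _)) h <;>
      first
        | exact h.symm
        | exact h
        | exact h.elim
  loopless := by
    constructor
    rintro (u | (_ | _)) h
    · exact G'.loopless.irrefl u h
    · exact h
    · exact h

variable {G' : SimpleGraph V} {x y : V} {cs : Set V}

@[simp] lemma apex_adj_inl_inl {u v : V} :
    (apexGraph G' x y cs).Adj (Sum.inl u) (Sum.inl v) ↔ G'.Adj u v := Iff.rfl

@[simp] lemma apex_adj_inl_false {u : V} :
    (apexGraph G' x y cs).Adj (Sum.inl u) (Sum.inr false) ↔ (u = x ∨ u = y) := Iff.rfl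

@[simp] lemma apex_adj_false_inl {u : V} :
    (apexGraph G' x y cs).Adj (Sum.inr false) (Sum.inl u) ↔ (u = x ∨ u = y) := Iff.rfl

@[simp] lemma apex_adj_inl_true {u : V} :
    (apexGraph G' x y cs).Adj (Sum.inl u) (Sum.inr true) ↔ u ∈ cs := Iff.rfl

@[simp] lemma apex_adj_true_inl {u : V} :
    (apexGraph G' x y cs).Adj (Sum.inr true) (Sum.inl u) ↔ u ∈ cs := Iff.rfl

@[simp] lemma apex_adj_inr_inr {a b : Bool} :
    ¬ (apexGraph G' x y cs).Adj (Sum.inr a) (Sum.inr b) := by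
  cases a <;> cases b <;> exact fun h => h

/-- The embedding of `G'` into the apex graph. -/
def inlHom (G' : SimpleGraph V) (x y : V) (cs : Set V) : G' →g apexGraph G' x y cs :=
  ⟨Sum.inl, fun h => h⟩

lemma inlHom_walk_support {u v : V} (w : G'.Walk u v) :
    ((w.map (inlHom G' x y cs)).support : List (V ⊕ Bool)) = w.support.map Sum.inl :=
  Walk.support_map _ _

/-- Pull a walk of the apex graph whose support lies in the `inl` part back to `G'`. -/
lemma apex_pullback {s t : V ⊕ Bool} (w : (apexGraph G' x y cs).Walk s t) :
    ∀ (u c : V), s = Sum.inl u → t = Sum.inl c →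
      (∀ z ∈ w.support, ∃ b, z = Sum.inl b) →
      ∃ r : G'.Walk u c, r.support.map Sum.inl = w.support := by
  induction w with
  | nil =>
    rintro u c rfl h2 _
    obtain rfl : u = c := Sum.inl.inj h2
    exact ⟨Walk.nil, by simp⟩
  | @cons a m b h q ih =>
    rintro u c rfl rfl hall
    obtain ⟨d, rfl⟩ : ∃ d, m = Sum.inl d := by
      refine hall m ?_
      rw [Walk.support_cons]
      exact List.mem_cons_of_mem _ q.start_mem_support
    obtain ⟨r, hr⟩ := ih d c rfl rfl (fun z hz => hall z (by
      rw [Walk.support_cons]; exact List.mem_cons_of_mem _ hz))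
    exact ⟨Walk.cons (apex_adj_inl_inl.mp h) r, by
      rw [Walk.support_cons, Walk.support_cons, ← hr, List.map_cons]⟩



lemma lift_support_inl {u v : V} (w : G'.Walk u v) {z : V ⊕ Bool}
    (hz : z ∈ (w.map (inlHom G' x y cs)).support) : ∃ d ∈ w.support, z = Sum.inl d := by
  rw [inlHom_walk_support] at hz
  obtain ⟨d, hd, rfl⟩ := List.mem_map.mp hz
  exact ⟨d, hd, rfl⟩

lemma lift_support_no_inr {u v : V} (w : G'.Walk u v) (b : Bool) :
    (Sum.inr b : V ⊕ Bool) ∉ (w.map (inlHom G' x y cs)).support := by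
  intro h
  obtain ⟨d, _, hd⟩ := lift_support_inl w h
  exact Sum.inr_ne_inl hd

lemma apex_connected (hconn : G'.Connected) (hc₀ : ∃ c₀, c₀ ∈ cs) :
    (apexGraph G' x y cs).Connected := by
  obtain ⟨c₀, hc₀⟩ := hc₀
  have hub : ∀ t : V ⊕ Bool, (apexGraph G' x y cs).Reachable t (Sum.inl x) := by
    rintro (s | (_ | _))
    · exact ⟨(hconn s x).some.map (inlHom G' x y cs)⟩
    · exact ⟨Walk.cons (apex_adj_false_inl.mpr (Or.inl rfl)) Walk.nil⟩
    · exact Reachable.trans ⟨Walk.cons (apex_adj_true_inl.mpr hc₀) Walk.nil⟩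
        ⟨(hconn c₀ x).some.map (inlHom G' x y cs)⟩
  have : Nonempty (V ⊕ Bool) := ⟨Sum.inl x⟩
  exact Connected.mk (fun a b => (hub a).trans (hub b).symm)

lemma apex_avoid (hconn : G'.Connected) (hxy : x ≠ y)
    (havoid : ∀ v a b : V, a ≠ v → b ≠ v → ∃ w : G'.Walk a b, v ∉ w.support)
    (hcs : ∀ u : V, ∃ c ∈ cs, c ≠ u) :
    ∀ (v a b : V ⊕ Bool), a ≠ v → b ≠ v →
      ∃ w : (apexGraph G' x y cs).Walk a b, v ∉ w.support := by
  classical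
  have glue : ∀ (v h : V ⊕ Bool) (a b : V ⊕ Bool),
      (∀ t : V ⊕ Bool, t ≠ v → ∃ w : (apexGraph G' x y cs).Walk t h, v ∉ w.support) →
      a ≠ v → b ≠ v → ∃ w : (apexGraph G' x y cs).Walk a b, v ∉ w.support := by
    intro v h a b hub ha hb
    obtain ⟨wa, hwa⟩ := hub a ha
    obtain ⟨wb, hwb⟩ := hub b hb
    refine ⟨wa.append wb.reverse, ?_⟩
    intro hmem
    rcases (Walk.mem_support_append_iff _ _).mp hmem with h1 | h1
    · exact hwa h1
    · rw [Walk.support_reverse, List.mem_reverse] at h1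
      exact hwb h1
  rintro (u₀ | (_ | _)) a b ha hb
  · -- avoiding an original vertex
    set x' := if x = u₀ then y else x with hx'def
    have hx'ne : x' ≠ u₀ := by
      rw [hx'def]
      split
      · rename_i hh
        rw [← hh]
        exact fun h => hxy h.symm
      · rename_i hh
        exact hh
    have hx'or : x' = x ∨ x' = y := by
      rw [hx'def]; split
      · exact Or.inr rfl
      · exact Or.inl rfl
    refine glue _ (Sum.inl x') a b ?_ ha hb
    rintro (s | (_ | _)) ht
    · have hs : s ≠ u₀ := fun h => ht (by rw [h])
      obtain ⟨w, hw⟩ := havoid u₀ s x' hs hx'ne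
      refine ⟨w.map (inlHom G' x y cs), ?_⟩
      intro hmem
      obtain ⟨d, hd, hdz⟩ := lift_support_inl w hmem
      obtain rfl : u₀ = d := Sum.inl.inj hdz
      exact hw hd
    · refine ⟨Walk.cons (apex_adj_false_inl.mpr hx'or) Walk.nil, ?_⟩
      rw [Walk.support_cons, Walk.support_nil, List.mem_cons, List.mem_singleton]
      rintro (h | h)
      · exact Sum.inl_ne_inr h
      · exact hx'ne (Sum.inl.inj h).symm
    · obtain ⟨c, hc, hcu⟩ := hcs u₀
      obtain ⟨w, hw⟩ := havoid u₀ c x' hcu hx'ne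
      refine ⟨Walk.cons (apex_adj_true_inl.mpr hc) (w.map (inlHom G' x y cs)), ?_⟩
      intro hmem
      replace hmem := List.mem_cons.mp hmem
      rcases hmem with h | h
      · exact Sum.inl_ne_inr h
      · obtain ⟨d, hd, hdz⟩ := lift_support_inl w h
        obtain rfl : u₀ = d := Sum.inl.inj hdz
        exact hw hd
  · -- avoiding the apex `inr false`
    refine glue _ (Sum.inl x) a b ?_ ha hb
    rintro (s | (_ | _)) ht
    · exact ⟨(hconn s x).some.map (inlHom G' x y cs), lift_support_no_inr _ _⟩
    · exact absurd rfl ht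
    · obtain ⟨c, hc, _⟩ := hcs x
      refine ⟨Walk.cons (apex_adj_true_inl.mpr hc) ((hconn c x).some.map (inlHom G' x y cs)), ?_⟩
      intro hmem
      replace hmem := List.mem_cons.mp hmem
      rcases hmem with h | h
      · exact Bool.noConfusion (Sum.inr.inj h)
      · exact lift_support_no_inr _ _ h
  · -- avoiding the apex `inr true`
    refine glue _ (Sum.inl x) a b ?_ ha hb
    rintro (s | (_ | _)) ht
    · exact ⟨(hconn s x).some.map (inlHom G' x y cs), lift_support_no_inr _ _⟩
    · refine ⟨Walk.cons (apex_adj_false_inl.mpr (Or.inl rfl)) Walk.nil, ?_⟩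
      rw [Walk.support_cons, Walk.support_nil, List.mem_cons, List.mem_singleton]
      rintro (h | h)
      · exact Bool.noConfusion (Sum.inr.inj h)
      · exact Sum.inr_ne_inl h
    · exact absurd rfl ht




lemma avoid_of_cut {H : SimpleGraph V} {v : V} (h : (H.induce (({v} : Set V)ᶜ)).Connected)
    {a b : V} (ha : a ≠ v) (hb : b ≠ v) : ∃ w : H.Walk a b, v ∉ w.support := by
  have ha' : a ∈ ({v} : Set V)ᶜ := by simpa using ha
  have hb' : b ∈ ({v} : Set V)ᶜ := by simpa using hb
  obtain ⟨w₀⟩ := h ⟨a, ha'⟩ ⟨b, hb'⟩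
  refine ⟨w₀.map (SimpleGraph.Embedding.induce _).toHom, ?_⟩
  intro hmem
  replace hmem : v ∈ (w₀.map (SimpleGraph.Embedding.induce (({v} : Set V)ᶜ)).toHom).support := hmem
  rw [Walk.support_map] at hmem
  obtain ⟨z, _, hz⟩ := List.mem_map.mp hmem
  exact z.2 (by simp [← hz])

lemma exists_third {W : Type*} [Fintype W] (h : 2 < Fintype.card W) (a b : W) :
    ∃ z, z ≠ a ∧ z ≠ b := by
  classical
  by_contra h'
  push_neg at h'
  have hsub : (Finset.univ : Finset W) ⊆ {a, b} := by
    intro z _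
    rcases eq_or_ne z a with rfl | hz
    · exact Finset.mem_insert_self _ _
    · rw [h' z hz]
      exact Finset.mem_insert_of_mem (Finset.mem_singleton_self _)
  have h1 := Finset.card_le_card hsub
  have h2 : ({a, b} : Finset W).card ≤ 2 :=
    le_trans (Finset.card_insert_le _ _) (by simp)
  rw [Finset.card_univ] at h1
  omega

lemma cycle_exists_ne {H : SimpleGraph V} {v : V} {C : H.Walk v v} (hC : C.IsCycle) (u : V) :
    ∃ c ∈ C.support, c ≠ u := by
  by_contra h
  push_neg at h
  have hnd : C.support.tail.Nodup := hC.2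
  have hlen : 2 ≤ C.support.tail.length := by
    have h3 := hC.three_le_length
    have h4 := Walk.length_support C
    rw [List.length_tail, h4]
    omega
  rcases hl : C.support.tail with _ | ⟨a, _ | ⟨b, l⟩⟩
  · rw [hl] at hlen; simp at hlen
  · rw [hl] at hlen; simp at hlen
  · have hmem : ∀ z ∈ C.support.tail, z ∈ C.support := fun z hz => List.mem_of_mem_tail hz
    have ha : a = u := h a (hmem a (by rw [hl]; exact List.mem_cons_self))
    have hb : b = u := h b (hmem b (by rw [hl]; exact List.mem_cons_of_mem _ (List.mem_cons_self)))
    rw [hl, List.nodup_cons] at hnd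
    exact hnd.1 (by rw [ha, hb]; exact List.mem_cons_self)

/-- Combine two end paths and a middle path into a single path. -/
lemma combine_path {H : SimpleGraph V} {Cs : Set V} {u₁ u₂ c₁ c₂ : V}
    (R₁ : H.Walk u₁ c₁) (R₂ : H.Walk u₂ c₂) (T : H.Walk c₁ c₂)
    (hR₁ : R₁.IsPath) (hR₂ : R₂.IsPath) (hT : T.IsPath)
    (hR1C : ∀ z ∈ R₁.support, z ∈ Cs → z = c₁)
    (hR2C : ∀ z ∈ R₂.support, z ∈ Cs → z = c₂)
    (hTC : ∀ z ∈ T.support, z ∈ Cs)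
    (hdisj : ∀ z, z ∈ R₁.support → z ∈ R₂.support → False) :
    (R₁.append (T.append R₂.reverse)).IsPath ∧
      (R₁.append (T.append R₂.reverse)).length = R₁.length + T.length + R₂.length := by
  constructor
  · apply Walk.IsPath.mk'
    rw [Walk.support_append, Walk.tail_support_append, List.nodup_append, List.nodup_append]
    have hc1T : c₁ ∉ T.support.tail := by
      have := hT.support_nodup
      rw [Walk.support_eq_cons T, List.nodup_cons] at this
      exact this.1
    have hc2R : c₂ ∉ R₂.reverse.support.tail := by
      have := hR₂.reverse.support_nodup
      rw [Walk.support_eq_cons R₂.reverse, List.nodup_cons] at this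
      exact this.1
    have hmemrev : ∀ z ∈ R₂.reverse.support.tail, z ∈ R₂.support := by
      intro z hz
      have := List.mem_of_mem_tail hz
      rwa [Walk.support_reverse, List.mem_reverse] at this
    refine ⟨hR₁.support_nodup, ⟨hT.support_nodup.tail, hR₂.reverse.support_nodup.tail, ?_⟩, ?_⟩
    · -- T.tail vs R₂rev.tail
      intro z hz _ hz' hzz; rw [← hzz] at hz'
      have hzC : z ∈ Cs := hTC z (List.mem_of_mem_tail hz)
      have : z = c₂ := hR2C z (hmemrev z hz') hzC
      subst this
      exact hc2R hz'
    · -- R₁ vs rest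
      intro z hz _ hz' hzz; rw [← hzz] at hz'
      rcases List.mem_append.mp hz' with h1 | h1
      · have hzC : z ∈ Cs := hTC z (List.mem_of_mem_tail h1)
        have : z = c₁ := hR1C z hz hzC
        subst this
        exact hc1T h1
      · exact hdisj z hz (hmemrev z h1)
  · rw [Walk.length_append, Walk.length_append, Walk.length_reverse]
    omega


/-- Extract, from an apex path joining the two apex vertices, a `G'`-path from `x` or `y`
to the target set meeting the target set only at its endpoint. -/
lemma apex_extract {G' : SimpleGraph V} {x y : V} {cs : Set V}
    (p : (apexGraph G' x y cs).Walk (Sum.inr false) (Sum.inr true)) (hp : p.IsPath) :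
    ∃ (u c : V) (r : G'.Walk u c), (u = x ∨ u = y) ∧ c ∈ cs ∧ r.IsPath ∧
      (∀ z ∈ r.support, Sum.inl z ∈ p.support) ∧ (∀ z ∈ r.support, z ∈ cs → z = c) := by
  classical
  cases p with
  | @cons _ m _ h₁ q =>
    rcases m with u | bb
    swap
    · exact absurd h₁ apex_adj_inr_inr
    have hu : u = x ∨ u = y := apex_adj_false_inl.mp h₁
    have hq := (Walk.cons_isPath_iff _ _).mp hp
    rcases hqr : q.reverse with _ | @⟨_, m₂, _, h₂, t⟩
    rcases m₂ with c | bb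
    swap
    · exact absurd h₂ apex_adj_inr_inr
    have hc : c ∈ cs := apex_adj_true_inl.mp h₂
    have hqrev : q.reverse.IsPath := hq.1.reverse
    rw [hqr] at hqrev
    have ht := (Walk.cons_isPath_iff _ _).mp hqrev
    have htq : ∀ z ∈ t.support, z ∈ q.support := by
      intro z hz
      have h0 : z ∈ q.reverse.support := by
        rw [hqr, Walk.support_cons]
        exact List.mem_cons_of_mem _ hz
      rwa [Walk.support_reverse, List.mem_reverse] at h0
    have hallinl : ∀ z ∈ t.support, ∃ d, z = Sum.inl d := by
      intro z hz
      rcases z with d | bb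
      · exact ⟨d, rfl⟩
      · cases bb
        · exact absurd (htq _ hz) hq.2
        · exact absurd hz ht.2
    obtain ⟨r₀, hr₀⟩ := apex_pullback t c u rfl rfl hallinl
    have hr₀nd : r₀.support.Nodup := by
      have h0 := ht.1.support_nodup
      rw [← hr₀] at h0
      exact h0.of_map
    have hmemp : ∀ z ∈ r₀.support, Sum.inl z ∈ (Walk.cons h₁ q).support := by
      intro z hz
      have h0 : Sum.inl z ∈ t.support := by
        rw [← hr₀]
        exact List.mem_map_of_mem hz
      rw [Walk.support_cons]
      exact List.mem_cons_of_mem _ (htq _ h0)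
    obtain ⟨c', hc', r', hr'p, hr'cs, hr'sub⟩ := exists_path_until cs r₀.reverse hc
    refine ⟨u, c', r', hu, hc', hr'p, ?_, hr'cs⟩
    intro z hz
    have h0 : z ∈ r₀.reverse.support := hr'sub z hz
    rw [Walk.support_reverse, List.mem_reverse] at h0
    exact hmemp z h0

end OddEvenAux

/-- A graph is `k`-connected if it has more than `k` vertices and removing any set of
fewer than `k` vertices leaves it connected. -/
def KConnected {V : Type*} [Fintype V] (G : SimpleGraph V) (k : ℕ) : Prop :=
  k < Fintype.card V ∧
    ∀ S : Finset V, S.card < k → (G.induce ((↑S : Set V)ᶜ)).Connected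

/-- A graph is non-bipartite iff it contains a cycle of odd length. -/
def NonBipartite {V : Type*} (G : SimpleGraph V) : Prop :=
  ∃ (v : V) (c : G.Walk v v), c.IsCycle ∧ Odd c.length

/-- If `G` is non-bipartite and `G + xy` is 2-connected, then `G` contains both an odd
path and an even path from `x` to `y`. -/
theorem odd_and_even_path_of_nonbipartite
    {V : Type*} [Fintype V] (G : SimpleGraph V) (x y : V) (hxy : x ≠ y)
    (hnb : NonBipartite G)
    (h2conn : KConnected (G ⊔ SimpleGraph.fromEdgeSet {s(x, y)}) 2) :
    (∃ P : G.Walk x y, P.IsPath ∧ Odd P.length) ∧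
      (∃ P : G.Walk x y, P.IsPath ∧ Even P.length) := by
  classical
  open OddEvenAux in
  obtain ⟨hcard, hS⟩ := h2conn
  set G' := G ⊔ SimpleGraph.fromEdgeSet {s(x, y)} with hG'
  -- the vertex-avoiding connectivity property of G'
  have havoid : ∀ v a b : V, a ≠ v → b ≠ v → ∃ w : G'.Walk a b, v ∉ w.support := by
    intro v a b ha hb
    have h1 := hS {v} (by simp)
    rw [Finset.coe_singleton] at h1
    exact avoid_of_cut h1 ha hb
  have hVne : Nonempty V := Fintype.card_pos_iff.mp (by omega)
  have hG'conn : G'.Connected := by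
    refine Connected.mk ?_
    intro a b
    rcases eq_or_ne a b with rfl | hab
    · exact Reachable.refl a
    · obtain ⟨z, hza, hzb⟩ := exists_third hcard a b
      obtain ⟨w, -⟩ := havoid z a b hza.symm hzb.symm
      exact ⟨w⟩
  obtain ⟨v₀, C, hC, hCodd⟩ := hnb
  set cs : Set V := {z | z ∈ C.support} with hcs_def
  have hcs : ∀ u : V, ∃ c ∈ cs, c ≠ u := fun u => cycle_exists_ne hC u
  have hc₀ : ∃ c₀, c₀ ∈ cs := ⟨v₀, C.start_mem_support⟩
  -- apply Whitney's theorem in the apex graph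
  have hconnA := apex_connected (x := x) (y := y) (cs := cs) hG'conn hc₀
  have havoidA := apex_avoid (cs := cs) hG'conn hxy havoid hcs
  have hbigA : ∀ a b : V ⊕ Bool, ∃ z, z ≠ a ∧ z ≠ b := by
    refine fun a b => exists_third ?_ a b
    rw [Fintype.card_sum, Fintype.card_bool]
    omega
  obtain ⟨p, q, hp, hq, hdisj⟩ := whitney hconnA havoidA hbigA
    ((apexGraph G' x y cs).dist (Sum.inr false) (Sum.inr true))
    (Sum.inr false) (Sum.inr true) (by simp) rfl
  obtain ⟨u₁, c₁, r₁, hu₁, hc₁, hr₁, hr₁p, hr₁cs⟩ := apex_extract p hp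
  obtain ⟨u₂, c₂, r₂, hu₂, hc₂, hr₂, hr₂q, hr₂cs⟩ := apex_extract q hq
  have hdisj₁₂ : ∀ z : V, z ∈ r₁.support → z ∈ r₂.support → False := by
    intro z h1 h2
    rcases hdisj _ (hr₁p z h1) (hr₂q z h2) with h | h <;> exact Sum.inl_ne_inr h
  have hne₁₂ : u₁ ≠ u₂ := by
    intro h
    exact hdisj₁₂ u₁ r₁.start_mem_support (h ▸ r₂.start_mem_support)
  have hc₂₁ : c₂ ≠ c₁ := by
    intro h
    exact hdisj₁₂ c₁ r₁.end_mem_support (h ▸ r₂.end_mem_support)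
  -- transfer to G
  have transferG : ∀ {u c : V} (r : G'.Walk u c), (x ∉ r.support ∨ y ∉ r.support) →
      ∃ r' : G.Walk u c, r'.support = r.support ∧ r'.length = r.length ∧
        (r.IsPath → r'.IsPath) := by
    intro u c r hr
    have hedges : ∀ e ∈ r.edges, e ∈ G.edgeSet := by
      intro e he
      have hEG := r.edges_subset_edgeSet he
      rw [hG', edgeSet_sup] at hEG
      rcases hEG with h | h
      · exact h
      · rw [edgeSet_fromEdgeSet] at h
        obtain ⟨h1, -⟩ := h
        rw [Set.mem_singleton_iff] at h1
        subst h1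
        rcases hr with hx | hy
        · exact absurd (r.fst_mem_support_of_mem_edges he) hx
        · exact absurd (r.snd_mem_support_of_mem_edges he) hy
    exact ⟨r.transfer G hedges, Walk.support_transfer _ _, Walk.length_transfer _ _,
      fun h => h.transfer _⟩
  -- each of r₁, r₂ misses x or y
  have hmiss₁ : x ∉ r₁.support ∨ y ∉ r₁.support := by
    have hu₂r : u₂ ∉ r₁.support := fun h => hdisj₁₂ u₂ h r₂.start_mem_support
    rcases hu₂ with rfl | rfl
    · exact Or.inl hu₂r
    · exact Or.inr hu₂r
  have hmiss₂ : x ∉ r₂.support ∨ y ∉ r₂.support := by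
    have hu₁r : u₁ ∉ r₂.support := fun h => hdisj₁₂ u₁ r₁.start_mem_support h
    rcases hu₁ with rfl | rfl
    · exact Or.inl hu₁r
    · exact Or.inr hu₁r
  obtain ⟨R₁, hR₁s, hR₁l, hR₁pf⟩ := transferG r₁ hmiss₁
  obtain ⟨R₂, hR₂s, hR₂l, hR₂pf⟩ := transferG r₂ hmiss₂
  have hR₁ : R₁.IsPath := hR₁pf hr₁
  have hR₂ : R₂.IsPath := hR₂pf hr₂
  -- the two arcs of the odd cycle
  obtain ⟨A, B, hA, hB, hABlen, hAs, hBs, hABdisj⟩ := cycle_arcs C hC hc₁ hc₂ hc₂₁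
  have hdisjR : ∀ z, z ∈ R₁.support → z ∈ R₂.support → False := by
    intro z h1 h2
    rw [hR₁s] at h1
    rw [hR₂s] at h2
    exact hdisj₁₂ z h1 h2
  have hR₁cs : ∀ z ∈ R₁.support, z ∈ cs → z = c₁ := by
    intro z hz
    rw [hR₁s] at hz
    exact hr₁cs z hz
  have hR₂cs : ∀ z ∈ R₂.support, z ∈ cs → z = c₂ := by
    intro z hz
    rw [hR₂s] at hz
    exact hr₂cs z hz
  obtain ⟨hWA, hWAlen⟩ := combine_path (Cs := cs) R₁ R₂ A hR₁ hR₂ hA hR₁cs hR₂cs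
    (fun z hz => hAs z hz) hdisjR
  obtain ⟨hWB, hWBlen⟩ := combine_path (Cs := cs) R₁ R₂ B hR₁ hR₂ hB hR₁cs hR₂cs
    (fun z hz => hBs z hz) hdisjR
  set WA := R₁.append (A.append R₂.reverse) with hWAdef
  set WB := R₁.append (B.append R₂.reverse) with hWBdef
  have hsum : Odd (WA.length + WB.length) := by
    obtain ⟨k, hk⟩ := hCodd
    rw [hWAlen, hWBlen]
    refine ⟨R₁.length + R₂.length + k, by omega⟩
  -- one of the two combined paths is odd, the other even
  have hboth : (∃ P : G.Walk u₁ u₂, P.IsPath ∧ Odd P.length) ∧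
      (∃ P : G.Walk u₁ u₂, P.IsPath ∧ Even P.length) := by
    rcases Nat.even_or_odd WA.length with hev | hod
    · refine ⟨⟨WB, hWB, ?_⟩, ⟨WA, hWA, hev⟩⟩
      rcases hsum with ⟨k, hk⟩
      rcases hev with ⟨m, hm⟩
      exact Nat.odd_iff.mpr (by omega)
    · refine ⟨⟨WA, hWA, hod⟩, ⟨WB, hWB, ?_⟩⟩
      rcases hsum with ⟨k, hk⟩
      rcases hod with ⟨m, hm⟩
      exact Nat.even_iff.mpr (by omega)
  rcases hu₁ with rfl | rfl <;> rcases hu₂ with rfl | rfl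
  · exact absurd rfl hne₁₂
  · exact hboth
  · obtain ⟨⟨P₁, hP₁, hP₁o⟩, ⟨P₂, hP₂, hP₂e⟩⟩ := hboth
    exact ⟨⟨P₁.reverse, hP₁.reverse, by rwa [Walk.length_reverse]⟩,
      ⟨P₂.reverse, hP₂.reverse, by rwa [Walk.length_reverse]⟩⟩
  · exact absurd rfl hne₁₂
end

section
/- Let G be a finite simple 2-connected graph with minimum degree at least 3, and let C = v_0 v_1 ⋯ v_{2s} v_0 (with s ≥ 1, indices modulo 2s+1) be an induced odd cycle of G such that G_1 := G − V(C) is connected but not 2-connected. Let D_1 be an end-block of G_1 with cut-vertex x, let A = V(D_1) \ {x}, and let B = V(G_1) \ A. Then there exists i ∈ ℤ_{2s+1} such that v_i has a neighbor in A and v_{i+s} has a neighbor in B. -/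
open SimpleGraph

/-- `w` is a cut-vertex of the subgraph of `G` induced on the (connected) set `S`:
removing `w` leaves a nonempty disconnected graph. -/
def IsCutVertexOn {V : Type*} (G : SimpleGraph V) (S : Set V) (w : V) : Prop :=
  w ∈ S ∧ (S \ {w}).Nonempty ∧ ¬ (G.induce (S \ {w})).Connected

/-- The subgraph of `G` induced on `T` is connected and has no cut-vertex of itself. -/
def NoCutVertexOn {V : Type*} (G : SimpleGraph V) (T : Set V) : Prop :=
  (G.induce T).Connected ∧ ∀ w ∈ T, ¬ IsCutVertexOn G T w

/-- `T` is (the vertex set of) a block of the subgraph of `G` induced on `S`: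
a maximal connected subgraph without a cut-vertex of itself. -/
def IsBlockOn {V : Type*} (G : SimpleGraph V) (S T : Set V) : Prop :=
  T ⊆ S ∧ T.Nonempty ∧ NoCutVertexOn G T ∧
    ∀ T' : Set V, T ⊆ T' → T' ⊆ S → NoCutVertexOn G T' → T' = T

/-- `T` is an end-block with cut-vertex `x` of the subgraph of `G` induced on `S`:
a block containing exactly one cut-vertex `x` of the induced subgraph. -/
def IsEndBlockOn {V : Type*} (G : SimpleGraph V) (S T : Set V) (x : V) : Prop :=
  IsBlockOn G S T ∧ x ∈ T ∧ IsCutVertexOn G S x ∧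
    ∀ w ∈ T, IsCutVertexOn G S w → w = x

/-- The subgraph of `G` induced on `S` is 2-connected: more than two vertices and
removing any single vertex leaves it connected. -/
def TwoConnectedOn {V : Type*} (G : SimpleGraph V) (S : Set V) : Prop :=
  2 < S.ncard ∧ ∀ w ∈ S, (G.induce (S \ {w})).Connected

section helpers
variable {V : Type*} {G : SimpleGraph V}

lemma reach_of_walk {U : Set V} : ∀ {u v : V} (p : G.Walk u v),
    (∀ z ∈ p.support, z ∈ U) → ∀ (hu : u ∈ U) (hv : v ∈ U),
    (G.induce U).Reachable ⟨u, hu⟩ ⟨v, hv⟩ := by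
  intro u v p
  induction p with
  | nil => intro _ hu hv; rfl
  | @cons a b c h q ih =>
    intro hall hu hv
    have hb : b ∈ U := hall b (by simp [Walk.support_cons])
    have hq : ∀ z ∈ q.support, z ∈ U := fun z hz => hall z (by simp [Walk.support_cons, hz])
    exact (Adj.reachable (by exact h : (G.induce U).Adj ⟨a, hu⟩ ⟨b, hb⟩)).trans (ih hq hb hv)

lemma reach_mono {U W : Set V} (hUW : U ⊆ W) {u v : V} {hu : u ∈ U} {hv : v ∈ U}
    (h : (G.induce U).Reachable ⟨u, hu⟩ ⟨v, hv⟩) :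
    (G.induce W).Reachable ⟨u, hUW hu⟩ ⟨v, hUW hv⟩ :=
  h.map (G.induceHomOfLE hUW).toHom

lemma closed_reach {U D : Set V} (hcl : ∀ a ∈ D, ∀ b ∈ U, G.Adj a b → b ∈ D)
    {u v : ↥U} (h : (G.induce U).Reachable u v) (hu : u.1 ∈ D) : v.1 ∈ D := by
  obtain ⟨p⟩ := h
  induction p with
  | nil => exact hu
  | @cons a b c h q ih => exact ih (hcl a.1 hu b.1 b.2 h)

lemma induce_connected_anchor {U : Set V} {c : V} (hc : c ∈ U)
    (h : ∀ u (hu : u ∈ U), (G.induce U).Reachable ⟨u, hu⟩ ⟨c, hc⟩) :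
    (G.induce U).Connected := by
  haveI : Nonempty ↥U := ⟨⟨c, hc⟩⟩
  exact ⟨fun a b => (h a.1 a.2).trans (h b.1 b.2).symm⟩

lemma induce_singleton_connected' (v : V) : (G.induce {v}).Connected := by
  refine induce_connected_anchor (c := v) rfl (fun u hu => ?_)
  rcases hu with rfl
  rfl

lemma split_unique [DecidableEq V] {u v w z : V} (p : G.Walk u v) (hp : p.IsPath)
    (hz : z ∈ p.support)
    (hw1 : w ∈ (p.takeUntil z hz).support) (hw2 : w ∈ (p.dropUntil z hz).support) : w = z := by
  have hnd : ((p.takeUntil z hz).append (p.dropUntil z hz)).support.Nodup := by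
    rw [Walk.take_spec]; exact hp.support_nodup
  rw [Walk.support_append] at hnd
  have hdisj := List.disjoint_of_nodup_append hnd
  have hw2' : w = z ∨ w ∈ (p.dropUntil z hz).support.tail := by
    have := hw2
    rw [Walk.support_eq_cons] at this
    exact List.mem_cons.mp this
  rcases hw2' with h' | h'
  · exact h'
  · exact absurd h' (hdisj hw1)

lemma exists_first_hit (T : Set V) : ∀ {b y : V} (p : G.Walk b y), p.IsPath → b ∉ T → y ∈ T →
    ∃ t, t ∈ T ∧ ∃ r : G.Walk b t, r.IsPath ∧ (∀ z ∈ r.support, z ∈ p.support) ∧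
      ∀ z ∈ r.support, z ∈ T → z = t := by
  intro b y p
  induction p with
  | nil => intro _ hb hy; exact absurd hy hb
  | @cons b c y h q ih =>
    intro hp hb hy
    by_cases hc : c ∈ T
    · refine ⟨c, hc, Walk.cons h Walk.nil, ?_, ?_, ?_⟩
      · exact (Walk.cons_isPath_iff _ _).mpr ⟨Walk.IsPath.nil, by simp [h.ne]⟩
      · intro z hz
        simp only [Walk.support_cons, Walk.support_nil, List.mem_cons, List.not_mem_nil,
          or_false] at hz
        rw [Walk.support_cons, List.mem_cons]
        rcases hz with rfl | rfl
        · exact Or.inl rfl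
        · exact Or.inr q.start_mem_support
      · intro z hz hzT
        simp only [Walk.support_cons, Walk.support_nil, List.mem_cons, List.not_mem_nil,
          or_false] at hz
        rcases hz with rfl | rfl
        · exact absurd hzT hb
        · rfl
    · obtain ⟨hq, hbq⟩ := (Walk.cons_isPath_iff _ _).mp hp
      obtain ⟨t, ht, r, hr, hsub, hone⟩ := ih hq hc hy
      refine ⟨t, ht, Walk.cons h r, ?_, ?_, ?_⟩
      · exact (Walk.cons_isPath_iff _ _).mpr ⟨hr, fun hb' => hbq (hsub b hb')⟩
      · intro z hz
        rw [Walk.support_cons, List.mem_cons] at hz ⊢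
        exact hz.imp id (fun h' => hsub z h')
      · intro z hz hzT
        rw [Walk.support_cons, List.mem_cons] at hz
        rcases hz with rfl | hz
        · exact absurd hzT hb
        · exact hone z hz hzT

lemma exists_walk_in {U : Set V} {u v : ↥U} (h : (G.induce U).Reachable u v) :
    ∃ q : G.Walk u.1 v.1, ∀ z ∈ q.support, z ∈ U := by
  obtain ⟨p⟩ := h
  induction p with
  | @nil a =>
    refine ⟨Walk.nil, fun z hz => ?_⟩
    rw [Walk.support_nil, List.mem_singleton] at hz
    exact hz ▸ a.2
  | @cons a b c h p ih =>
    obtain ⟨q, hq⟩ := ih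
    refine ⟨Walk.cons (show G.Adj a.1 b.1 from h) q, ?_⟩
    intro z hz
    rw [Walk.support_cons, List.mem_cons] at hz
    rcases hz with rfl | hz
    · exact a.2
    · exact hq z hz

end helpers

lemma block_no_out_edge {V : Type*} [DecidableEq V] {G : SimpleGraph V} {S T : Set V} {x : V}
    (hT : IsEndBlockOn G S T x) {a b : V}
    (ha : a ∈ T) (hax : a ≠ x) (hb : b ∈ S) (hbT : b ∉ T) (hadj : G.Adj a b) : False := by
  obtain ⟨⟨hTS, hTne, ⟨hTconn, hTnocut⟩, hmax⟩, hxT, hcut, huniq⟩ := hT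
  have hnc : ¬ IsCutVertexOn G S a := fun hca => hax (huniq a ha hca)
  have haS : a ∈ S := hTS ha
  have hSa : (G.induce (S \ {a})).Connected := by
    by_contra hxc
    exact hnc ⟨haS, ⟨b, hb, hadj.ne'⟩, hxc⟩
  have hxSa : x ∈ S \ {a} := ⟨hTS hxT, fun h => hax (Set.mem_singleton_iff.mp h).symm⟩
  have hbSa : b ∈ S \ {a} := ⟨hb, fun h => hadj.ne' (Set.mem_singleton_iff.mp h)⟩
  obtain ⟨q, hqS⟩ := exists_walk_in (hSa.preconnected ⟨b, hbSa⟩ ⟨x, hxSa⟩)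
  have hpS : ∀ z ∈ (q.toPath : G.Walk b x).support, z ∈ S \ {a} :=
    fun z hz => hqS z (q.support_toPath_subset hz)
  obtain ⟨t, ht, r, hr, hrsub, hone⟩ :=
    exists_first_hit T (q.toPath : G.Walk b x) q.toPath.2 hbT hxT
  have hrS : ∀ z ∈ r.support, z ∈ S \ {a} := fun z hz => hpS z (hrsub z hz)
  have haR : a ∉ r.support := fun h => (hrS a h).2 rfl
  set T' : Set V := T ∪ {z | z ∈ r.support} with hT'
  have hTT' : T ⊆ T' := Set.subset_union_left
  have hrT' : ∀ z ∈ r.support, z ∈ T' := fun z hz => Or.inr hz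
  have hT'S : T' ⊆ S := by
    rintro z (hz | hz)
    · exact hTS hz
    · exact (hrS z hz).1
  have hTw : ∀ w : V, (T \ {w}).Nonempty → (G.induce (T \ {w})).Connected := by
    intro w hne
    by_cases hw : w ∈ T
    · by_contra hnc2
      exact hTnocut w hw ⟨hw, hne, hnc2⟩
    · have heq : T \ {w} = T := by
        ext z
        simp only [Set.mem_diff, Set.mem_singleton_iff]
        exact ⟨fun h => h.1, fun h => ⟨h, fun e => hw (e ▸ h)⟩⟩
      rw [heq]; exact hTconn
  have hta : t ≠ a := fun h => haR (h ▸ r.end_mem_support)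
  have hconn' : ∀ w : V, (G.induce (T' \ {w})).Connected := by
    intro w
    obtain ⟨c, hcT, hcw⟩ : ∃ c, c ∈ T ∧ c ≠ w := by
      by_cases hwa : a = w
      · exact ⟨t, ht, fun h => hta (h.trans hwa.symm)⟩
      · exact ⟨a, ha, hwa⟩
    have hcc : c ∈ T' \ {w} := ⟨hTT' hcT, hcw⟩
    refine induce_connected_anchor hcc (fun u hu => ?_)
    have reachT : ∀ z (hz : z ∈ T \ {w}), (G.induce (T' \ {w})).Reachable
        ⟨z, ⟨hTT' hz.1, hz.2⟩⟩ ⟨c, hcc⟩ := by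
      intro z hz
      have hsub : T \ {w} ⊆ T' \ {w} := fun y hy => ⟨hTT' hy.1, hy.2⟩
      exact reach_mono hsub ((hTw w ⟨c, hcT, hcw⟩).preconnected ⟨z, hz⟩ ⟨c, hcT, hcw⟩)
    have huw : u ≠ w := hu.2
    rcases hu.1 with huT | hur
    · exact reachT u ⟨huT, hu.2⟩
    · by_cases hwd : w ∈ (r.dropUntil u hur).support
      · have hwt : w ∉ (r.takeUntil u hur).support :=
          fun hin => huw (split_unique r hr hur hin hwd).symm
        have hr1sub : ∀ z ∈ (r.takeUntil u hur).reverse.support, z ∈ T' \ {w} := by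
          intro z hz
          rw [Walk.support_reverse, List.mem_reverse] at hz
          exact ⟨hrT' z (r.support_takeUntil_subset hur hz),
            fun he => hwt ((Set.mem_singleton_iff.mp he) ▸ hz)⟩
        have hbm : b ∈ T' \ {w} := hr1sub b (by
          rw [Walk.support_reverse, List.mem_reverse]
          exact (r.takeUntil u hur).start_mem_support)
        have reach1 : (G.induce (T' \ {w})).Reachable ⟨u, hu⟩ ⟨b, hbm⟩ :=
          reach_of_walk _ hr1sub _ _
        have haw : a ≠ w := fun h => haR (h ▸ (r.support_dropUntil_subset hur hwd))
        have ham : a ∈ T' \ {w} := ⟨hTT' ha, haw⟩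
        have reach2 : (G.induce (T' \ {w})).Reachable ⟨b, hbm⟩ ⟨a, ham⟩ :=
          Adj.reachable (by exact hadj.symm)
        exact (reach1.trans reach2).trans (reachT a ⟨ha, haw⟩)
      · have hr2sub : ∀ z ∈ (r.dropUntil u hur).support, z ∈ T' \ {w} := by
          intro z hz
          exact ⟨hrT' z (r.support_dropUntil_subset hur hz),
            fun he => hwd ((Set.mem_singleton_iff.mp he) ▸ hz)⟩
        have htm : t ∈ T' \ {w} := hr2sub t (r.dropUntil u hur).end_mem_support
        have reach1 : (G.induce (T' \ {w})).Reachable ⟨u, hu⟩ ⟨t, htm⟩ :=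
          reach_of_walk _ hr2sub _ _
        exact reach1.trans (reachT t ⟨ht, htm.2⟩)
  have hT'conn : (G.induce T').Connected := by
    have hct : t ∈ T' := hTT' ht
    refine induce_connected_anchor hct (fun u hu => ?_)
    rcases hu with huT | hur
    · exact reach_mono hTT' (hTconn.preconnected ⟨u, huT⟩ ⟨t, ht⟩)
    · exact reach_of_walk (r.dropUntil u hur)
        (fun z hz => hrT' z (r.support_dropUntil_subset hur hz)) _ _
  have hnocv : NoCutVertexOn G T' := ⟨hT'conn, fun w hw hcw => hcw.2.2 (hconn' w)⟩
  have := hmax T' hTT' hT'S hnocv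
  exact hbT (this ▸ hrT' b r.start_mem_support)

/-- Claim 2 of the paper: if `G` is 2-connected with minimum degree at least 3,
`C = v_0 ⋯ v_{2s}` is an induced odd cycle such that `G₁ := G - V(C)` is connected but
not 2-connected, `D₁` is an end-block of `G₁` with cut-vertex `x`, `A = V(D₁) \ {x}`
and `B = V(G₁) \ A`, then some `v_i` has a neighbour in `A` while `v_{i+s}` has a
neighbour in `B`. -/
theorem exists_quasi_diagonal_neighbours
    {V : Type*} [Fintype V] [DecidableEq V] (G : SimpleGraph V) [DecidableRel G.Adj]
    (s : ℕ) (hs : 1 ≤ s)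
    (h2conn : KConnected G 2)
    (hdeg : ∀ v : V, 3 ≤ G.degree v)
    (vmap : ZMod (2 * s + 1) → V) (hinj : Function.Injective vmap)
    (hadj : ∀ i : ZMod (2 * s + 1), G.Adj (vmap i) (vmap (i + 1)))
    (hind : ∀ i j : ZMod (2 * s + 1), G.Adj (vmap i) (vmap j) → j = i + 1 ∨ i = j + 1)
    (hconn : (G.induce ((Set.range vmap)ᶜ)).Connected)
    (hnot2conn : ¬ TwoConnectedOn G ((Set.range vmap)ᶜ))
    (T : Set V) (x : V) (hT : IsEndBlockOn G ((Set.range vmap)ᶜ) T x) :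
    ∃ i : ZMod (2 * s + 1),
      (∃ a ∈ T \ {x}, G.Adj (vmap i) a) ∧
      (∃ b ∈ (Set.range vmap)ᶜ \ (T \ {x}), G.Adj (vmap (i + (s : ZMod (2 * s + 1)))) b) := by
  haveI : NeZero (2 * s + 1) := ⟨by omega⟩
  set S := (Set.range vmap)ᶜ with hSdef
  have hTS : T ⊆ S := hT.1.1
  have hTconn : (G.induce T).Connected := hT.1.2.2.1.1
  have hTnocut := hT.1.2.2.1.2
  have hmax := hT.1.2.2.2
  have hxT : x ∈ T := hT.2.1
  have hcut := hT.2.2.1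
  have hxS : x ∈ S := hTS hxT
  have hvx : ∀ j, vmap j ≠ x := fun j h => hxS ⟨j, h⟩
  have hvS : ∀ j, vmap j ∉ S := fun j h => h (Set.mem_range_self j)
  -- Step L0 : T has a vertex other than x
  obtain ⟨a₀, ha₀T, ha₀x⟩ : ∃ a₀, a₀ ∈ T ∧ a₀ ≠ x := by
    by_contra h0
    push_neg at h0
    obtain ⟨y, hy⟩ := hcut.2.1
    have hne : (⟨x, hxS⟩ : ↥S) ≠ ⟨y, hy.1⟩ := by
      intro h
      exact hy.2 (Set.mem_singleton_iff.mpr (congrArg Subtype.val h).symm)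
    obtain ⟨pw⟩ := hconn.preconnected ⟨x, hxS⟩ ⟨y, hy.1⟩
    obtain ⟨u', hadj', q, -⟩ := (Walk.not_nil_iff (p := pw)).mp (Walk.not_nil_of_ne (p := pw) hne)
    have hxz : G.Adj x u'.1 := hadj'
    have hzS : u'.1 ∈ S := u'.2
    set z := u'.1
    have hzx : z ≠ x := hxz.ne'
    have hpair : NoCutVertexOn G {x, z} := by
      constructor
      · refine induce_connected_anchor (U := {x, z}) (c := x) (Or.inl rfl) (fun u hu => ?_)
        rcases hu with rfl | rfl
        · exact Reachable.refl _
        · exact Adj.reachable (by exact hxz.symm)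
      · intro w hw hcw
        apply hcw.2.2
        rcases hw with rfl | rfl
        · have heq : ({w, z} : Set V) \ {w} = {z} := by
            ext u
            constructor
            · rintro ⟨rfl | rfl, hu⟩
              · exact absurd rfl hu
              · rfl
            · rintro rfl
              exact ⟨Or.inr rfl, hzx⟩
          rw [heq]; exact induce_singleton_connected' z
        · have heq : ({x, z} : Set V) \ {z} = {x} := by
            ext u
            constructor
            · rintro ⟨rfl | rfl, hu⟩
              · rfl
              · exact absurd rfl hu
            · rintro rfl
              exact ⟨Or.inl rfl, fun h => hzx (Set.mem_singleton_iff.mp h).symm⟩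
          rw [heq]; exact induce_singleton_connected' x
    have hTeq := hmax {x, z}
      (fun t ht => Set.mem_insert_iff.mpr (Or.inl (h0 t ht)))
      (by rintro u (rfl | rfl); exacts [hxS, hzS]) hpair
    exact hzx (h0 z (hTeq ▸ (Or.inr rfl : z ∈ ({x, z} : Set V))))
  -- Step L2 : every cycle vertex has a neighbour off the cycle
  have hC : ∀ i : ZMod (2 * s + 1), ∃ u, u ∈ S ∧ G.Adj (vmap i) u := by
    intro i
    by_contra h
    push_neg at h
    have hsub : G.neighborFinset (vmap i) ⊆ {vmap (i + 1), vmap (i - 1)} := by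
      intro u hu
      rw [SimpleGraph.mem_neighborFinset] at hu
      have huR : u ∈ Set.range vmap := by
        by_contra hr
        exact h u hr hu
      obtain ⟨j, rfl⟩ := huR
      rcases hind i j hu with h1 | h2
      · rw [h1]; exact Finset.mem_insert_self _ _
      · have : j = i - 1 := by rw [h2]; ring
        rw [this]; exact Finset.mem_insert_of_mem (Finset.mem_singleton_self _)
    have hcard := Finset.card_le_card hsub
    have h2 : ({vmap (i + 1), vmap (i - 1)} : Finset V).card ≤ 2 :=
      (Finset.card_insert_le _ _).trans (by simp)
    have h3 : 3 ≤ (G.neighborFinset (vmap i)).card := hdeg (vmap i)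
    omega
  -- G - x is connected
  have hGx : (G.induce ({x} : Set V)ᶜ).Connected := by
    have h1 := h2conn.2 {x} (by simp)
    rwa [Finset.coe_singleton] at h1
  have hAconn : (G.induce (T \ {x})).Connected := by
    by_contra hc
    exact hTnocut x hxT ⟨hxT, ⟨a₀, ha₀T, ha₀x⟩, hc⟩
  -- Step L3 : some cycle vertex has a neighbour in A = T \ {x}
  have hCA : ∃ i : ZMod (2 * s + 1), ∃ a, a ∈ T \ {x} ∧ G.Adj (vmap i) a := by
    by_contra hno
    push_neg at hno
    have hclosed : ∀ a ∈ T \ {x}, ∀ z ∈ ({x} : Set V)ᶜ, G.Adj a z → z ∈ T \ {x} := by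
      intro a haA z hzx hz
      have hzR : z ∉ Set.range vmap := by
        rintro ⟨j, rfl⟩
        exact hno j a haA hz.symm
      have hzS : z ∈ S := hzR
      by_cases hzT : z ∈ T
      · exact ⟨hzT, hzx⟩
      · exact absurd hz (fun h => block_no_out_edge hT haA.1 haA.2 hzS hzT h)
    have ha₀m : a₀ ∈ ({x} : Set V)ᶜ := ha₀x
    have h0m : vmap 0 ∈ ({x} : Set V)ᶜ := hvx 0
    have hres := closed_reach hclosed
      (hGx.preconnected ⟨a₀, ha₀m⟩ ⟨vmap 0, h0m⟩) (⟨ha₀T, ha₀x⟩ : a₀ ∈ T \ {x})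
    exact hvS 0 (hTS hres.1)
  -- main contradiction
  by_contra hgoal
  push_neg at hgoal
  have hstep : ∀ i : ZMod (2 * s + 1), (∃ a ∈ T \ {x}, G.Adj (vmap i) a) →
      (∃ a ∈ T \ {x}, G.Adj (vmap (i + (s : ZMod (2 * s + 1)))) a) := by
    intro i hi
    obtain ⟨u, huS, hadju⟩ := hC (i + (s : ZMod (2 * s + 1)))
    by_cases huA : u ∈ T \ {x}
    · exact ⟨u, huA, hadju⟩
    · exact absurd hadju (hgoal i hi u ⟨huS, huA⟩)
  obtain ⟨i₀, a₁, ha₁, hadj₁⟩ := hCA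
  have hkey : ∀ n : ℕ, ∃ a ∈ T \ {x}, G.Adj (vmap (i₀ + n • (s : ZMod (2 * s + 1)))) a := by
    intro n
    induction n with
    | zero => simp only [zero_nsmul, add_zero]; exact ⟨a₁, ha₁, hadj₁⟩
    | succ n ih =>
      have heq : i₀ + (n + 1) • (s : ZMod (2 * s + 1)) =
          (i₀ + n • (s : ZMod (2 * s + 1))) + (s : ZMod (2 * s + 1)) := by
        rw [succ_nsmul, ← add_assoc]
      rw [heq]
      exact hstep _ ih
  have hall : ∀ j : ZMod (2 * s + 1), ∃ a ∈ T \ {x}, G.Adj (vmap j) a := by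
    intro j
    have hinv : ∃ m : ℕ, (m : ZMod (2 * s + 1)) * (s : ZMod (2 * s + 1)) = 1 := by
      refine ⟨2 * s - 1, ?_⟩
      have hnat : (2 * s - 1) * s = (s - 1) * (2 * s + 1) + 1 := by
        obtain ⟨k, rfl⟩ : ∃ k, s = k + 1 := ⟨s - 1, by omega⟩
        rw [show 2 * (k + 1) - 1 = 2 * k + 1 by omega, show (k + 1) - 1 = k by omega]
        ring
      calc ((2 * s - 1 : ℕ) : ZMod (2 * s + 1)) * ((s : ℕ) : ZMod (2 * s + 1))
          = (((2 * s - 1) * s : ℕ) : ZMod (2 * s + 1)) := by rw [Nat.cast_mul]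
        _ = (((s - 1) * (2 * s + 1) + 1 : ℕ) : ZMod (2 * s + 1)) := by rw [hnat]
        _ = 1 := by
            rw [Nat.cast_add, Nat.cast_mul, Nat.cast_one, ZMod.natCast_self, mul_zero, zero_add]
    obtain ⟨m, hm⟩ := hinv
    set c := (j - i₀) * (m : ZMod (2 * s + 1)) with hc
    have hres := hkey c.val
    have hcv : ((c.val : ℕ) : ZMod (2 * s + 1)) = c := ZMod.natCast_rightInverse c
    rw [nsmul_eq_mul, hcv] at hres
    have heq : i₀ + c * (s : ZMod (2 * s + 1)) = j := by
      rw [hc, mul_assoc, hm, mul_one]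
      ring
    rwa [heq] at hres
  have hnoB : ∀ j : ZMod (2 * s + 1), ∀ b ∈ S \ (T \ {x}), ¬ G.Adj (vmap j) b := by
    intro j
    have hres := hgoal (j - (s : ZMod (2 * s + 1))) (hall _)
    rwa [sub_add_cancel] at hres
  -- final contradiction: a component of G₁ - x inside B is cut off from the cycle in G - x
  have hdisc := hcut.2.2
  have ha₀Sx : a₀ ∈ S \ {x} := ⟨hTS ha₀T, ha₀x⟩
  haveI : Nonempty ↥(S \ {x}) := ⟨⟨a₀, ha₀Sx⟩⟩
  obtain ⟨p, q, hpq⟩ : ∃ p q : ↥(S \ {x}), ¬ (G.induce (S \ {x})).Reachable p q := by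
    by_contra hno
    push_neg at hno
    exact hdisc ⟨hno⟩
  have hAreach : ∀ z (hz : z ∈ T \ {x}),
      (G.induce (S \ {x})).Reachable ⟨a₀, ha₀Sx⟩ ⟨z, ⟨hTS hz.1, hz.2⟩⟩ := by
    intro z hz
    have hsub : T \ {x} ⊆ S \ {x} := fun y hy => ⟨hTS hy.1, hy.2⟩
    exact reach_mono hsub (hAconn.preconnected ⟨a₀, ⟨ha₀T, ha₀x⟩⟩ ⟨z, hz⟩)
  obtain ⟨u, hu⟩ : ∃ u : ↥(S \ {x}), ¬ (G.induce (S \ {x})).Reachable ⟨a₀, ha₀Sx⟩ u := by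
    by_cases hp' : (G.induce (S \ {x})).Reachable ⟨a₀, ha₀Sx⟩ p
    · exact ⟨q, fun h => hpq (hp'.symm.trans h)⟩
    · exact ⟨p, hp'⟩
  set D : Set V := {z | ∃ h : z ∈ S \ {x},
    ¬ (G.induce (S \ {x})).Reachable ⟨a₀, ha₀Sx⟩ ⟨z, h⟩} with hD
  have hDcl : ∀ d ∈ D, ∀ z ∈ ({x} : Set V)ᶜ, G.Adj d z → z ∈ D := by
    rintro d ⟨hdm, hdr⟩ z hzx hdz
    have hdA : d ∉ T \ {x} := fun hA => hdr (hAreach d hA)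
    have hzR : z ∉ Set.range vmap := by
      rintro ⟨j, rfl⟩
      exact hnoB j d ⟨hdm.1, hdA⟩ hdz.symm
    have hzSx : z ∈ S \ {x} := ⟨hzR, hzx⟩
    refine ⟨hzSx, fun hr => hdr ?_⟩
    exact hr.trans (Adj.reachable
      (by exact hdz.symm : (G.induce (S \ {x})).Adj ⟨z, hzSx⟩ ⟨d, hdm⟩))
  have huD : (u : V) ∈ D := ⟨u.2, hu⟩
  have humem : (u : V) ∈ ({x} : Set V)ᶜ := u.2.2
  have h0m : vmap 0 ∈ ({x} : Set V)ᶜ := hvx 0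
  have hres := closed_reach hDcl (hGx.preconnected ⟨u.1, humem⟩ ⟨vmap 0, h0m⟩) huD
  obtain ⟨hmem, -⟩ := hres
  exact hvS 0 hmem.1
end

section
/- Let G be a finite simple 2-connected non-bipartite graph, let x and y be distinct vertices such that G − {x, y} is disconnected, let C be a connected component of G − {x, y}, let G_1 be the subgraph of G induced on V(C) ∪ {x, y}, and let G_2 be the subgraph of G induced on V(G) \ V(C). If both G_1 and G_2 are bipartite, then either every path from x to y in G_1 has even length and every path from x to y in G_2 has odd length, or every path from x to y in G_1 has odd length and every path from x to y in G_2 has even length. -/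
set_option maxHeartbeats 1000000


/-- The subgraph of `G` induced on `S` is bipartite: `S` can be partitioned into two
parts so that every edge inside `S` joins the two parts. -/
def BipartiteOn {V : Type*} (G : SimpleGraph V) (S : Set V) : Prop :=
  ∃ A : Set V, ∀ u ∈ S, ∀ w ∈ S, G.Adj u w → (u ∈ A ↔ w ∉ A)

/-- `T` is (the vertex set of) a connected component of the subgraph of `G` induced on
the ambient set `amb`. -/
def IsComponentOn {V : Type*} (G : SimpleGraph V) (amb T : Set V) : Prop :=
  T.Nonempty ∧ T ⊆ amb ∧ (G.induce T).Connected ∧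
    ∀ u ∈ T, ∀ w ∈ amb, G.Adj u w → w ∈ T

/-- Parity of a walk within a properly 2-colored set is determined by the colors of
its endpoints. -/
lemma walk_parity {V : Type*} (G : SimpleGraph V) (A S : Set V)
    (hA : ∀ u ∈ S, ∀ w ∈ S, G.Adj u w → (u ∈ A ↔ w ∉ A))
    {x y : V} (p : G.Walk x y) (hs : ∀ u ∈ p.support, u ∈ S) :
    Even p.length ↔ (x ∈ A ↔ y ∈ A) := by
  induction p with
  | nil => simp
  | @cons u v w h q ih =>
    have hu : u ∈ S := hs u (by simp)
    have hv : v ∈ S := hs v (by simp [SimpleGraph.Walk.support_cons, q.start_mem_support])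
    have hq : ∀ z ∈ q.support, z ∈ S := fun z hz =>
      hs z (by simp [SimpleGraph.Walk.support_cons, hz])
    have h1 := hA u hu v hv h
    have h2 := ih hq
    simp only [SimpleGraph.Walk.length_cons, Nat.even_add_one]
    tauto

/-- If the two colorings agree at `x` and `y`, they glue to a global proper 2-coloring,
contradicting the odd cycle. -/
lemma glue_false {V : Type*} (G : SimpleGraph V) (hnb : NonBipartite G)
    (x y : V) (T : Set V) (hsub : T ⊆ ({x, y} : Set V)ᶜ)
    (hclosed : ∀ u ∈ T, ∀ w ∈ (({x, y} : Set V)ᶜ), G.Adj u w → w ∈ T)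
    (A₁ A₂ : Set V)
    (h1 : ∀ u ∈ T ∪ {x, y}, ∀ w ∈ T ∪ {x, y}, G.Adj u w → (u ∈ A₁ ↔ w ∉ A₁))
    (h2 : ∀ u ∈ Tᶜ, ∀ w ∈ Tᶜ, G.Adj u w → (u ∈ A₂ ↔ w ∉ A₂))
    (hax : x ∈ A₁ ↔ x ∈ A₂) (hay : y ∈ A₁ ↔ y ∈ A₂) : False := by
  classical
  have cross : ∀ u ∈ T, ∀ w : V, w ∉ T → G.Adj u w → w ∈ ({x, y} : Set V) := by
    intro u hu w hw hadj
    by_contra hwxy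
    exact hw (hclosed u hu w hwxy hadj)
  have hagree : ∀ w ∈ ({x, y} : Set V), (w ∈ A₁ ↔ w ∈ A₂) := by
    intro w hw
    rcases hw with rfl | hw
    · exact hax
    · rw [Set.mem_singleton_iff] at hw; subst hw; exact hay
  have hA : ∀ u w : V, G.Adj u w →
      (((u ∈ T ∧ u ∈ A₁) ∨ (u ∉ T ∧ u ∈ A₂)) ↔ ¬((w ∈ T ∧ w ∈ A₁) ∨ (w ∉ T ∧ w ∈ A₂))) := by
    intro u w hadj
    by_cases hu : u ∈ T <;> by_cases hw : w ∈ T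
    · have := h1 u (Or.inl hu) w (Or.inl hw) hadj
      tauto
    · have hwxy := cross u hu w hw hadj
      have he := h1 u (Or.inl hu) w (Or.inr hwxy) hadj
      have ha := hagree w hwxy
      tauto
    · have huxy := cross w hw u hu hadj.symm
      have he := h1 u (Or.inr huxy) w (Or.inl hw) hadj
      have ha := hagree u huxy
      tauto
    · have := h2 u hu w hw hadj
      tauto
  obtain ⟨v, c, _, hodd⟩ := hnb
  have heven := (walk_parity G {v | (v ∈ T ∧ v ∈ A₁) ∨ (v ∉ T ∧ v ∈ A₂)} Set.univ
    (fun u _ w _ h => hA u w h) c (fun u _ => Set.mem_univ u)).mpr Iff.rfl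
  exact (Nat.not_even_iff_odd.mpr hodd) heven

/-- If `G` is 2-connected and non-bipartite, `G - {x, y}` is disconnected with component
`C` (with vertex set `T`), and both `G₁ := G[T ∪ {x, y}]` and `G₂ := G[V ∖ T]` are
bipartite, then either all `x`–`y` paths in `G₁` are even and all `x`–`y` paths in `G₂`
are odd, or vice versa. -/
theorem bipartite_pieces_path_parity
    {V : Type*} [Fintype V] [DecidableEq V] (G : SimpleGraph V)
    (x y : V) (hxy : x ≠ y)
    (h2conn : KConnected G 2) (hnb : NonBipartite G)
    (hdisc : ¬ (G.induce (({x, y} : Set V)ᶜ)).Connected)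
    (T : Set V) (hT : IsComponentOn G (({x, y} : Set V)ᶜ) T)
    (hG1 : BipartiteOn G (T ∪ {x, y}))
    (hG2 : BipartiteOn G (Tᶜ)) :
    ((∀ P : G.Walk x y, P.IsPath → (∀ u ∈ P.support, u ∈ T ∪ {x, y}) → Even P.length) ∧
      (∀ P : G.Walk x y, P.IsPath → (∀ u ∈ P.support, u ∈ Tᶜ) → Odd P.length)) ∨
    ((∀ P : G.Walk x y, P.IsPath → (∀ u ∈ P.support, u ∈ T ∪ {x, y}) → Odd P.length) ∧
      (∀ P : G.Walk x y, P.IsPath → (∀ u ∈ P.support, u ∈ Tᶜ) → Even P.length)) := by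
  classical
  obtain ⟨A₁, h1⟩ := hG1
  obtain ⟨A₂, h2⟩ := hG2
  have key1 : ∀ P : G.Walk x y, (∀ u ∈ P.support, u ∈ T ∪ {x, y}) →
      (Even P.length ↔ (x ∈ A₁ ↔ y ∈ A₁)) := fun P hs =>
    walk_parity G A₁ (T ∪ {x, y}) h1 P hs
  have key2 : ∀ P : G.Walk x y, (∀ u ∈ P.support, u ∈ Tᶜ) →
      (Even P.length ↔ (x ∈ A₂ ↔ y ∈ A₂)) := fun P hs =>
    walk_parity G A₂ Tᶜ h2 P hs
  have hglue : ¬ ((x ∈ A₁ ↔ y ∈ A₁) ↔ (x ∈ A₂ ↔ y ∈ A₂)) := by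
    intro hb
    by_cases hx : x ∈ A₁ ↔ x ∈ A₂
    · exact glue_false G hnb x y T hT.2.1 hT.2.2.2 A₁ A₂ h1 h2 hx (by tauto)
    · refine glue_false G hnb x y T hT.2.1 hT.2.2.2 A₁ A₂ᶜ h1 ?_ ?_ ?_
      · intro u hu w hw hadj
        have := h2 u hu w hw hadj
        simp only [Set.mem_compl_iff]
        tauto
      · simp only [Set.mem_compl_iff]; tauto
      · simp only [Set.mem_compl_iff]; tauto
  by_cases b1 : (x ∈ A₁ ↔ y ∈ A₁)
  · left
    constructor
    · intro P _ hs
      exact (key1 P hs).mpr b1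
    · intro P _ hs
      have hb2 : ¬ (x ∈ A₂ ↔ y ∈ A₂) := fun h => hglue (iff_of_true b1 h)
      rw [← Nat.not_even_iff_odd]
      exact fun he => hb2 ((key2 P hs).mp he)
  · right
    constructor
    · intro P _ hs
      rw [← Nat.not_even_iff_odd]
      exact fun he => b1 ((key1 P hs).mp he)
    · intro P _ hs
      have hb2 : (x ∈ A₂ ↔ y ∈ A₂) := by tauto
      exact (key2 P hs).mpr hb2
end
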